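/- Let A be a bounded regular closed subset of ℝ² with finitely many components, and let c be the closure of a connected component of interior A or of a connected component of the complement of A. Then the boundary of c is contained in the union of the boundaries of the other components of A (closures of the other connected components of interior A and of the complement of A). -/

import Mathlib

/-- The components of a plane region A: closures of connected components of the
interior of A, and closures of connected components of the complement of A. -/
def components (A : Set (EuclideanSpace ℝ (Fin 2))) :
    Set (Set (EuclideanSpace ℝ (Fin 2))) :=
  {c | (∃ x ∈ interior A, c = closure (connectedComponentIn (interior A) x)) ∨
       (∃ x ∈ Aᶜ, c = closure (connectedComponentIn Aᶜ x))}

lemma components_struct {A : Set (EuclideanSpace ℝ (Fin 2))} (hA : IsClosed A)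
    {c : Set (EuclideanSpace ℝ (Fin 2))} (hc : c ∈ components A) :
    ∃ F x, IsOpen F ∧ (F = interior A ∨ F = Aᶜ) ∧ x ∈ F ∧
      c = closure (connectedComponentIn F x) := by
  rcases hc with ⟨x, hx, rfl⟩ | ⟨x, hx, rfl⟩
  · exact ⟨interior A, x, isOpen_interior, Or.inl rfl, hx, rfl⟩
  · exact ⟨Aᶜ, x, hA.isOpen_compl, Or.inr rfl, hx, rfl⟩

lemma components_cover (A : Set (EuclideanSpace ℝ (Fin 2)))
    (hreg : A = closure (interior A)) (hfin : (components A).Finite) :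
    (Set.univ : Set (EuclideanSpace ℝ (Fin 2))) ⊆ ⋃ c ∈ components A, c := by
  have hclosed : IsClosed (⋃ c ∈ components A, c) := by
    apply hfin.isClosed_biUnion
    intro c hc
    rcases hc with ⟨x, hx, rfl⟩ | ⟨x, hx, rfl⟩ <;> exact isClosed_closure
  intro y _
  by_cases hy : y ∈ A
  · rw [hreg] at hy
    refine closure_minimal ?_ hclosed hy
    intro z hz
    exact Set.mem_biUnion (Or.inl ⟨z, hz, rfl⟩)
      (subset_closure (mem_connectedComponentIn hz))
  · exact Set.mem_biUnion (Or.inr ⟨y, hy, rfl⟩)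
      (subset_closure (mem_connectedComponentIn hy))

/-- For bounded regular closed A with finitely many components, the
boundary of each component is contained in the union of the boundaries of the
other components. -/
theorem stmt_17 (A : Set (EuclideanSpace ℝ (Fin 2)))
    (hreg : A = closure (interior A)) (hbdd : Bornology.IsBounded A)
    (hfin : (components A).Finite)
    (c : Set (EuclideanSpace ℝ (Fin 2))) (hc : c ∈ components A) :
    frontier c ⊆ ⋃ c' ∈ components A \ {c}, frontier c' := by
  have hA : IsClosed A := hreg ▸ isClosed_closure
  obtain ⟨F, x₀, hF, hFeq, hx₀, hceq⟩ := components_struct hA hc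
  intro x hx
  -- x is in the closure of the complement of c
  have hsub : cᶜ ⊆ ⋃ c' ∈ components A \ {c}, c' := by
    intro y hy
    have h := components_cover A hreg hfin (Set.mem_univ y)
    simp only [Set.mem_iUnion, exists_prop] at h ⊢
    obtain ⟨c', hc', hyc'⟩ := h
    exact ⟨c', ⟨hc', fun hh => hy (hh ▸ hyc')⟩, hyc'⟩
  have hSclosed : IsClosed (⋃ c' ∈ components A \ {c}, c') := by
    apply hfin.diff.isClosed_biUnion
    intro c' hc'
    obtain ⟨_, _, _, _, _, h⟩ := components_struct hA hc'.1
    exact h ▸ isClosed_closure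
  have hxS : x ∈ ⋃ c' ∈ components A \ {c}, c' :=
    closure_minimal hsub hSclosed (by rw [closure_compl]; exact hx.2)
  simp only [Set.mem_iUnion, exists_prop] at hxS
  obtain ⟨c', hc', hxc'⟩ := hxS
  obtain ⟨F', x₁, hF', hF'eq, hx₁, hc'eq⟩ := components_struct hA hc'.1
  -- x is not in the interior of c'
  have hxint : x ∉ interior c' := by
    intro hxint
    have hxcl : x ∈ closure (connectedComponentIn F x₀) := by
      have h := hx.1; rw [hceq, closure_closure] at h; exact h
    obtain ⟨u, huint, huU⟩ :=
      mem_closure_iff.mp hxcl (interior c') isOpen_interior hxint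
    have huU' : u ∈ closure (connectedComponentIn F' x₁) := by
      rw [← hc'eq]; exact interior_subset huint
    have hUopen : IsOpen (connectedComponentIn F x₀) := hF.connectedComponentIn
    obtain ⟨z, hzU, hzU'⟩ := mem_closure_iff.mp huU' _ hUopen huU
    have hzF : z ∈ F := connectedComponentIn_subset F x₀ hzU
    have hzF' : z ∈ F' := connectedComponentIn_subset F' x₁ hzU'
    have hFF' : F = F' := by
      rcases hFeq with h1 | h1 <;> rcases hF'eq with h2 | h2
      · rw [h1, h2]
      · have hz2 : z ∈ Aᶜ := h2 ▸ hzF'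
        exact absurd (interior_subset (h1 ▸ hzF)) hz2
      · have hz2 : z ∈ Aᶜ := h1 ▸ hzF
        exact absurd (interior_subset (h2 ▸ hzF')) hz2
      · rw [h1, h2]
    subst hFF'
    have hUU' : connectedComponentIn F x₀ = connectedComponentIn F x₁ :=
      (connectedComponentIn_eq hzU).trans (connectedComponentIn_eq hzU').symm
    exact hc'.2 (by rw [Set.mem_singleton_iff, hc'eq, ← hUU', ← hceq])
  exact Set.mem_biUnion hc' ⟨subset_closure hxc', hxint⟩
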